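/- Let C be a cotorsion R-module and let W be an n-th cosyzygy of C (i.e. there is an exact sequence 0 → C → E^0 → ⋯ → E^{n-1} → W → 0 with each E^i injective). Then W is L_n-injective. -/

import Mathlib

open CategoryTheory

/-- Flatness of a module over an arbitrary (possibly noncommutative) ring,
via the equational criterion: every relation is a consequence of trivial relations. -/
def IsFlatMod (R : Type) [Ring R] (M : Type) [AddCommGroup M] [Module R M] : Prop :=
  ∀ (ι : Type) (_ : Fintype ι) (r : ι → R) (x : ι → M),
    (∑ i, r i • x i = 0) →
      ∃ (κ : Type) (_ : Fintype κ) (a : ι → κ → R) (y : κ → M),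
        (∀ i, x i = ∑ j, a i j • y j) ∧ ∀ j, (∑ i, r i * a i j) = 0

variable (R : Type) [Ring R]

/-- `Ext^n_R(M, N) = 0`. -/
def extVanish (n : ℕ) (M N : ModuleCat.{0} R) : Prop :=
  Subsingleton (((Ext ℤ (ModuleCat.{0} R) n).obj (Opposite.op M)).obj N)

/-- `M` has flat dimension at most `n`. -/
def fdLE : ℕ → ModuleCat.{0} R → Prop
  | 0, M => IsFlatMod R M
  | n+1, M => ∃ (K F : ModuleCat.{0} R) (f : K ⟶ F) (g : F ⟶ M),
      IsFlatMod R F ∧ Function.Injective f ∧ Function.Surjective g ∧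
        Function.Exact f g ∧ fdLE n K

/-- `W` is `L_n`-injective: `Ext^1_R(M, W) = 0` for every `M` of flat dimension at most `n`. -/
def LnInj (n : ℕ) (W : ModuleCat.{0} R) : Prop :=
  ∀ M : ModuleCat.{0} R, fdLE R n M → extVanish R 1 M W

/-- `C` is cotorsion: `Ext^1_R(F, C) = 0` for every flat module `F`. -/
def Cotorsion (C : ModuleCat.{0} R) : Prop :=
  ∀ F : ModuleCat.{0} R, IsFlatMod R F → extVanish R 1 F C

/-- `Cosyzygy R m W W'` : `W'` is an `m`-th cosyzygy of `W`, i.e. there is an exact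
sequence `0 → W → E^0 → ⋯ → E^{m-1} → W' → 0` with all `E^i` injective. -/
def Cosyzygy : ℕ → ModuleCat.{0} R → ModuleCat.{0} R → Prop
  | 0, W, W' => ∃ e : W ⟶ W', Function.Bijective e
  | m+1, W, W' => ∃ (E C : ModuleCat.{0} R) (f : W ⟶ E) (g : E ⟶ C),
      Injective E ∧ Function.Injective f ∧ Function.Surjective g ∧
        Function.Exact f g ∧ Cosyzygy m C W'


/-! ### Auxiliary machinery -/

section AuxHelpers

variable {R}

lemma descendLM {F M X : Type} [AddCommGroup F] [AddCommGroup M] [AddCommGroup X]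
    [Module R F] [Module R M] [Module R X]
    (g : F →ₗ[R] M) (t : F →ₗ[R] X) (hg : Function.Surjective g)
    (h : ∀ f, g f = 0 → t f = 0) : ∃ s : M →ₗ[R] X, ∀ f, s (g f) = t f := by
  have key : ∀ f f', g f = g f' → t f = t f' := by
    intro f f' hff
    have := h (f - f') (by rw [map_sub, hff, sub_self])
    rwa [map_sub, sub_eq_zero] at this
  refine ⟨⟨⟨fun m => t (Function.surjInv hg m), ?_⟩, ?_⟩, ?_⟩
  · intro m m'
    have : t (Function.surjInv hg (m + m'))
        = t (Function.surjInv hg m + Function.surjInv hg m') :=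
      key _ _ (by rw [map_add, Function.surjInv_eq hg, Function.surjInv_eq hg,
        Function.surjInv_eq hg])
    simpa [map_add] using this
  · intro r m
    have : t (Function.surjInv hg (r • m)) = t (r • Function.surjInv hg m) :=
      key _ _ (by rw [map_smul, Function.surjInv_eq hg, Function.surjInv_eq hg])
    simpa [map_smul] using this
  · intro f
    exact key _ _ (Function.surjInv_eq hg _)

lemma factorLM {W X F : Type} [AddCommGroup F] [AddCommGroup W] [AddCommGroup X]
    [Module R F] [Module R W] [Module R X]
    (ι : W →ₗ[R] X) (hι : Function.Injective ι) (t : F →ₗ[R] X)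
    (h : ∀ f, ∃ w, ι w = t f) : ∃ ψ : F →ₗ[R] W, ∀ f, ι (ψ f) = t f := by
  choose w hw using h
  refine ⟨⟨⟨w, ?_⟩, ?_⟩, fun f => hw f⟩
  · intro a b; apply hι; simp [hw, map_add]
  · intro r a; apply hι; simp [hw, map_smul]

end AuxHelpers

/-- Every short exact sequence `0 → W → X → M → 0` admits a section of the surjection. -/
def SplitAllSeq (M W : ModuleCat.{0} R) : Prop :=
  ∀ (X : ModuleCat.{0} R) (ι : W ⟶ X) (q : X ⟶ M), Function.Injective ι →
    Function.Surjective q → Function.Exact ι q → ∃ s : M ⟶ X, ∀ m, q (s m) = m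

variable {R}

lemma SplitAllSeq.retraction {M W : ModuleCat.{0} R} (h : SplitAllSeq R M W)
    (X : ModuleCat.{0} R) (ι : W ⟶ X) (q : X ⟶ M) (hι : Function.Injective ι)
    (hq : Function.Surjective q) (hex : Function.Exact ι q) :
    ∃ r : X ⟶ W, ∀ w, r (ι w) = w := by
  obtain ⟨s, hs⟩ := h X ι q hι hq hex
  have h2 : ∀ x : X, ∃ w, ι w = x - s (q x) := by
    intro x
    exact (hex _).mp (by simp [map_sub, hs])
  obtain ⟨ψ, hψ⟩ := factorLM ι.hom hι
    (LinearMap.id - s.hom ∘ₗ q.hom) (by simpa using h2)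
  refine ⟨ModuleCat.ofHom ψ, fun w => ?_⟩
  apply hι
  have := hψ (ι w)
  simpa [(hex (ι w)).mpr ⟨w, rfl⟩] using this

/-- Transfer `SplitAllSeq` along an isomorphism in the second argument. -/
lemma SplitAllSeq.of_iso {M W D : ModuleCat.{0} R} (h : SplitAllSeq R M W)
    (e : W ⟶ D) (he : Function.Bijective e) : SplitAllSeq R M D := by
  intro X ι q hι hq hex
  refine h X (e ≫ ι) q (hι.comp he.1) hq ?_
  intro x
  rw [hex x]
  constructor
  · rintro ⟨d, hd⟩
    obtain ⟨w, rfl⟩ := he.2 d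
    exact ⟨w, hd⟩
  · rintro ⟨w, hw⟩
    exact ⟨e w, hw⟩

lemma extend_of_retr {M W K P : ModuleCat.{0} R}
    (h : ∀ (X : ModuleCat.{0} R) (ι : W ⟶ X) (q : X ⟶ M), Function.Injective ι →
      Function.Surjective q → Function.Exact ι q → ∃ r : X ⟶ W, ∀ w, r (ι w) = w)
    (j : K ⟶ P) (g : P ⟶ M) (hj : Function.Injective j) (hg : Function.Surjective g)
    (hex : Function.Exact j g) (ψ : K ⟶ W) :
    ∃ Ψ : P ⟶ W, ∀ k, Ψ (j k) = ψ k := by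
  classical
  set N : Submodule R (W × P) :=
    LinearMap.range (LinearMap.prod ψ.hom (-j.hom)) with hN
  have negapp : ∀ k : K, (-j.hom) k = -(j k) := fun _ => rfl
  have memN : ∀ k : K, ((ψ k, -(j k)) : W × P) ∈ N := fun k => ⟨k, by
    simp [LinearMap.prod_apply, negapp]⟩
  set X : ModuleCat.{0} R := ModuleCat.of R ((W × P) ⧸ N) with hX
  set mk : W × P →ₗ[R] ((W × P) ⧸ N) := N.mkQ with hmk
  have mkeq : ∀ a b : W × P, a - b ∈ N → mk a = mk b := by
    intro a b hab
    rw [hmk, Submodule.mkQ_apply, Submodule.mkQ_apply]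
    exact (Submodule.Quotient.eq N).mpr hab
  have mkeq' : ∀ a b : W × P, mk a = mk b → a - b ∈ N := by
    intro a b hab
    rw [hmk, Submodule.mkQ_apply, Submodule.mkQ_apply] at hab
    exact (Submodule.Quotient.eq N).mp hab
  set ι : W ⟶ X := ModuleCat.ofHom (mk ∘ₗ LinearMap.inl R W P) with hι
  have hιmk : ∀ w : W, ι w = mk (w, 0) := fun w => rfl
  have hker : N ≤ LinearMap.ker (g.hom ∘ₗ LinearMap.snd R W P) := by
    rintro ⟨w, p⟩ ⟨k, hk⟩
    have h2 : -(j k) = p := by simpa using congrArg Prod.snd hk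
    simp only [LinearMap.mem_ker, LinearMap.coe_comp, Function.comp_apply, LinearMap.snd_apply]
    rw [← h2, map_neg, neg_eq_zero]
    exact (hex (j k)).mpr ⟨k, rfl⟩
  set q : X ⟶ M := ModuleCat.ofHom (N.liftQ (g.hom ∘ₗ LinearMap.snd R W P) hker) with hq
  have hqmk : ∀ wp : W × P, q (mk wp) = g wp.2 := fun wp => rfl
  have hιinj : Function.Injective ι := by
    intro w w' hww
    rw [hιmk, hιmk] at hww
    obtain ⟨k, hk⟩ := mkeq' _ _ hww
    have h2 : -(j k) = 0 := by simpa [negapp] using congrArg Prod.snd hk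
    have hk0 : k = 0 := by apply hj; rw [map_zero, ← neg_eq_zero]; exact h2
    have h1 : ψ k = w - w' := by simpa using congrArg Prod.fst hk
    rw [hk0, map_zero] at h1
    exact sub_eq_zero.mp h1.symm
  have hqsurj : Function.Surjective q := by
    intro m
    obtain ⟨p, hp⟩ := hg m
    exact ⟨mk (0, p), by rw [hqmk]; exact hp⟩
  have hexviq : Function.Exact ι q := by
    intro y
    obtain ⟨⟨w, p⟩, rfl⟩ := Submodule.mkQ_surjective N y
    rw [show N.mkQ (w, p) = mk (w, p) from rfl]
    constructor
    · intro h0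
      rw [hqmk] at h0
      obtain ⟨k, hk⟩ := (hex p).mp h0
      refine ⟨w + ψ k, ?_⟩
      rw [hιmk]
      apply mkeq
      refine ⟨k, ?_⟩
      have : ((w + ψ k, 0) : W × P) - (w, p) = (ψ k, -p) := by
        ext <;> simp
      rw [this, ← hk]
      simp [LinearMap.prod_apply, negapp]
    · rintro ⟨w', he⟩
      rw [← he, hιmk, hqmk]
      simp
  obtain ⟨r, hr⟩ := h X ι q hιinj hqsurj hexviq
  refine ⟨ModuleCat.ofHom (r.hom ∘ₗ (mk ∘ₗ LinearMap.inr R W P)), fun k => ?_⟩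
  show r (mk (0, j k)) = ψ k
  have : mk (0, j k) = mk (ψ k, 0) := by
    apply mkeq
    refine ⟨-k, ?_⟩
    have : ((0, j k) : W × P) - (ψ k, 0) = (-ψ k, j k) := by ext <;> simp
    rw [this]
    simp [LinearMap.prod_apply, negapp]
  rw [this]
  exact hr (ψ k)

/-- L7: lift a map K ⟶ Q through a surjection E ⟶ Q with kernel C, when every
extension of K by C splits. -/
lemma lift_through_surjection {C E Q K : ModuleCat.{0} R}
    (f : C ⟶ E) (g : E ⟶ Q) (hf : Function.Injective f) (hg : Function.Surjective g)
    (hex : Function.Exact f g)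
    (hsplit : ∀ (X : ModuleCat.{0} R) (ι : C ⟶ X) (q : X ⟶ K), Function.Injective ι →
      Function.Surjective q → Function.Exact ι q → ∃ s : K ⟶ X, ∀ m, q (s m) = m)
    (ψ : K ⟶ Q) : ∃ φ : K ⟶ E, ∀ k, g (φ k) = ψ k := by
  classical
  set t : E × K →ₗ[R] Q := g.hom ∘ₗ LinearMap.fst R E K
    - ψ.hom ∘ₗ LinearMap.snd R E K with ht
  set Y : Submodule R (E × K) := LinearMap.ker t with hY
  have memY : ∀ p : E × K, p ∈ Y ↔ g p.1 = ψ p.2 := by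
    intro p
    rw [hY, LinearMap.mem_ker, ht]
    constructor
    · intro h0
      have : g p.1 - ψ p.2 = 0 := h0
      exact sub_eq_zero.mp this
    · intro h0
      show g p.1 - ψ p.2 = 0
      rw [h0, sub_self]
  set X : ModuleCat.{0} R := ModuleCat.of R ↥Y with hX
  set ι : C ⟶ X := ModuleCat.ofHom (LinearMap.codRestrict Y
      (LinearMap.prod f.hom 0)
      (fun c => by rw [memY]; show g (f c) = ψ 0; rw [map_zero]; exact (hex (f c)).mpr ⟨c, rfl⟩)
    : C →ₗ[R] ↥Y) with hι
  set q : X ⟶ K := ModuleCat.ofHom (LinearMap.snd R E K ∘ₗ Y.subtype) with hq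
  have hιinj : Function.Injective ι := by
    intro c c' hcc
    apply hf
    exact congrArg Prod.fst (congrArg Subtype.val hcc)
  have hqsurj : Function.Surjective q := by
    intro k
    obtain ⟨e, he⟩ := hg (ψ k)
    exact ⟨⟨(e, k), (memY _).mpr he⟩, rfl⟩
  have hexq : Function.Exact ι q := by
    rintro ⟨⟨e, k⟩, hek⟩
    constructor
    · intro h0
      have hk0 : k = 0 := h0
      obtain ⟨c, hc⟩ := (hex e).mp (by
        rw [(memY _).mp hek, hk0, map_zero])
      refine ⟨c, ?_⟩
      apply Subtype.ext
      show (f c, (0 : K)) = (e, k)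
      rw [hk0, hc]
    · rintro ⟨c, hc⟩
      rw [← hc]
      rfl
  obtain ⟨s, hs⟩ := hsplit X ι q hιinj hqsurj hexq
  refine ⟨ModuleCat.ofHom ((LinearMap.fst R E K ∘ₗ Y.subtype) ∘ₗ s.hom), fun k => ?_⟩
  show g ((s k).val.1) = ψ k
  rw [(memY _).mp (s k).property]
  exact congrArg ψ (hs k)

/-- L8: extend a map into an injective module along an injection. -/
lemma extend_into_injective {E K F : ModuleCat.{0} R} (hE : Injective E)
    (j : K ⟶ F) (hj : Function.Injective j) (φ : K ⟶ E) :
    ∃ Φ : F ⟶ E, ∀ k, Φ (j k) = φ k := by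
  have : Mono j := (ModuleCat.mono_iff_injective j).mpr hj
  exact ⟨Injective.factorThru φ j, fun k => by
    have := Injective.comp_factorThru φ j
    calc (Injective.factorThru φ j) (j k) = (j ≫ Injective.factorThru φ j) k := rfl
    _ = φ k := by rw [this]⟩

/-- L5: splitting from the extension property w.r.t. a projective presentation. -/
lemma splitAll_of_extension_property {M W K P : ModuleCat.{0} R} (hP : Projective P)
    (j : K ⟶ P) (g : P ⟶ M) (hj : Function.Injective j) (hg : Function.Surjective g)
    (hex : Function.Exact j g)
    (hEP : ∀ ψ : K ⟶ W, ∃ Ψ : P ⟶ W, ∀ k, Ψ (j k) = ψ k)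
    (X : ModuleCat.{0} R) (ι : W ⟶ X) (q : X ⟶ M) (hι : Function.Injective ι)
    (hq : Function.Surjective q) (hexq : Function.Exact ι q) :
    ∃ s : M ⟶ X, ∀ m, q (s m) = m := by
  have : Epi q := (ModuleCat.epi_iff_surjective q).mpr hq
  set t : P ⟶ X := Projective.factorThru g q with ht
  have htq : ∀ p, q (t p) = g p := by
    intro p
    calc q (t p) = (t ≫ q) p := rfl
    _ = g p := by rw [ht, Projective.factorThru_comp]
  -- t ∘ j lands in ker q = range ι
  obtain ⟨ψ, hψ⟩ := factorLM ι.hom hι (t.hom ∘ₗ j.hom)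
    (fun k => (hexq _).mp (by
      show q (t (j k)) = 0
      rw [htq]
      exact (hex (j k)).mpr ⟨k, rfl⟩))
  obtain ⟨Ψ, hΨ⟩ := hEP (ModuleCat.ofHom ψ)
  -- t - ι ∘ Ψ kills range j = ker g, descend
  obtain ⟨s, hs⟩ := descendLM g.hom
    (t.hom - ι.hom ∘ₗ Ψ.hom) hg (by
      intro p hp
      obtain ⟨k, hk⟩ := (hex p).mp hp
      show t p - ι (Ψ p) = 0
      rw [← hk, hΨ]
      show t (j k) - ι.hom (ψ k) = 0
      rw [hψ]
      show t (j k) - t (j k) = 0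
      rw [sub_self])
  refine ⟨ModuleCat.ofHom s, fun m => ?_⟩
  obtain ⟨p, rfl⟩ := hg m
  show q (s (g.hom p)) = g p
  rw [hs]
  show q (t p - ι (Ψ p)) = g p
  rw [map_sub, htq, (hexq (ι (Ψ p))).mpr ⟨Ψ p, rfl⟩, sub_zero]

lemma extVanish_iff_splitAllSeq (M W : ModuleCat.{0} R) :
    Subsingleton (((Ext ℤ (ModuleCat.{0} R) 1).obj (Opposite.op M)).obj W) ↔
      SplitAllSeq R M W := by
  obtain ⟨P⟩ := (HasProjectiveResolution.out (Z := M))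
  have crit : Subsingleton (((Ext ℤ (ModuleCat.{0} R) 1).obj (Opposite.op M)).obj W) ↔
      ∀ φ : P.complex.X 1 ⟶ W, P.complex.d 2 1 ≫ φ = 0 →
        ∃ ψ : P.complex.X 0 ⟶ W, P.complex.d 1 0 ≫ ψ = φ := by
    have e := P.isoExt (R := ℤ) 1 W
    have eqv : (((Ext ℤ (ModuleCat.{0} R) 1).obj (Opposite.op M)).obj W) ≃
        ((P.complex.linearYonedaObj ℤ W).homology 1) := by
      refine ⟨e.hom, e.inv, fun x => ?_, fun x => ?_⟩
      · show (e.hom ≫ e.inv) x = x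
        rw [e.hom_inv_id]; rfl
      · show (e.inv ≫ e.hom) x = x
        rw [e.inv_hom_id]; rfl
    rw [Equiv.subsingleton_congr eqv]
    set D := P.complex.linearYonedaObj ℤ W with hD
    have h1 : Subsingleton (D.homology 1) ↔ Limits.IsZero (D.homology 1) := by
      constructor
      · intro h
        exact ModuleCat.isZero_of_subsingleton _
      · intro h
        constructor
        intro a b
        have : 𝟙 (D.homology 1) = 0 := Limits.IsZero.eq_of_src h _ _
        calc a = (𝟙 (D.homology 1)) a := rfl
        _ = (0 : D.homology 1 ⟶ D.homology 1) a := by rw [this]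
        _ = (0 : D.homology 1 ⟶ D.homology 1) b := rfl
        _ = (𝟙 (D.homology 1)) b := by rw [this]
        _ = b := rfl
    rw [h1, ← HomologicalComplex.exactAt_iff_isZero_homology,
      D.exactAt_iff' 0 1 2 (by simp) (by simp)]
    rw [ShortComplex.moduleCat_exact_iff]
    exact ⟨fun h φ hφ => h φ hφ, fun h φ hφ => h φ hφ⟩
  rw [crit]
  set π0 : P.complex.X 0 ⟶ M := P.π.f 0 with hπ0
  have hπsurj : Function.Surjective π0 := fun m =>
    (ModuleCat.epi_iff_surjective (P.π.f 0)).mp inferInstance m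
  have hex₀ : ∀ x : P.complex.X 0, π0 x = 0 → ∃ y, P.complex.d 1 0 y = x := by
    intro x hx
    exact (ShortComplex.moduleCat_exact_iff _).mp P.exact₀ x hx
  have hex₁ : ∀ x : P.complex.X 1, P.complex.d 1 0 x = 0 →
      ∃ y, P.complex.d 2 1 y = x := by
    intro x hx
    exact (ShortComplex.moduleCat_exact_iff _).mp (P.exact_succ 0) x hx
  have hdπ : ∀ y, π0 (P.complex.d 1 0 y) = 0 := fun y =>
    congrArg (fun f => f.hom y) P.complex_d_comp_π_f_zero
  constructor
  · -- criterion → SplitAllSeq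
    intro h X ι q hι hq hexq
    have : Epi q := (ModuleCat.epi_iff_surjective q).mpr hq
    set t0 : P.complex.X 0 ⟶ X := Projective.factorThru π0 q with ht0
    have ht0q : ∀ p, q (t0 p) = π0 p := fun p =>
      congrArg (fun f => f.hom p) (Projective.factorThru_comp π0 q)

    obtain ⟨φ, hφ⟩ := factorLM ι.hom hι
      (t0.hom ∘ₗ (P.complex.d 1 0).hom)
      (fun y => (hexq _).mp (by
        show q (t0 (P.complex.d 1 0 y)) = 0
        rw [ht0q, hdπ]))
    have hdd : ∀ z, P.complex.d 1 0 (P.complex.d 2 1 z) = 0 := by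
      intro z
      have : P.complex.d 2 1 ≫ P.complex.d 1 0 = 0 := P.complex.d_comp_d 2 1 0
      calc P.complex.d 1 0 (P.complex.d 2 1 z) = (P.complex.d 2 1 ≫ P.complex.d 1 0) z := rfl
      _ = (0 : P.complex.X 2 ⟶ P.complex.X 0) z := by rw [this]
      _ = 0 := rfl
    obtain ⟨ψ, hψ⟩ := h (ModuleCat.ofHom φ) (by
      ext z
      apply hι
      show ι (φ (P.complex.d 2 1 z)) = ι ((0 : P.complex.X 2 ⟶ W) z)
      rw [hφ]
      show t0 (P.complex.d 1 0 (P.complex.d 2 1 z)) = ι ((0 : P.complex.X 2 ⟶ W) z)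
      rw [hdd]
      show t0 0 = ι ((0 : P.complex.X 2 ⟶ W) z)
      rw [map_zero]
      show (0 : ↑X) = ι 0
      rw [map_zero])
    obtain ⟨s, hs⟩ := descendLM π0.hom
      (t0.hom - ι.hom ∘ₗ ψ.hom) hπsurj (by
        intro p hp
        obtain ⟨y, rfl⟩ := hex₀ p hp
        show t0 (P.complex.d 1 0 y) - ι (ψ (P.complex.d 1 0 y)) = 0
        have h1 : ι (ψ (P.complex.d 1 0 y)) = ι ((P.complex.d 1 0 ≫ ψ) y) := rfl
        rw [h1, hψ]
        show t0 (P.complex.d 1 0 y) - ι.hom (φ y) = 0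
        rw [hφ]
        exact sub_self _)
    refine ⟨ModuleCat.ofHom s, fun m => ?_⟩
    obtain ⟨p, rfl⟩ := hπsurj m
    show q (s (π0.hom p)) = π0 p
    rw [hs]
    show q (t0 p - ι (ψ p)) = π0 p
    rw [map_sub, ht0q, (hexq (ι (ψ p))).mpr ⟨ψ p, rfl⟩, sub_zero]
  · -- SplitAllSeq → criterion
    intro h φ hφ
    set Kr : Submodule R (P.complex.X 0) := LinearMap.range (P.complex.d 1 0).hom
      with hKr
    set K : ModuleCat.{0} R := ModuleCat.of R ↥Kr with hK
    set j : K ⟶ P.complex.X 0 := ModuleCat.ofHom Kr.subtype with hj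
    set gcor : P.complex.X 1 →ₗ[R] ↥Kr :=
      (P.complex.d 1 0).hom.rangeRestrict with hgcor
    have hgcorsurj : Function.Surjective gcor := by
      rintro ⟨x, y, rfl⟩
      exact ⟨y, rfl⟩
    obtain ⟨ψK, hψK⟩ := descendLM gcor φ.hom hgcorsurj (by
      intro x hx
      have : P.complex.d 1 0 x = 0 := by
        have := congrArg (Subtype.val) hx
        exact this
      obtain ⟨y, rfl⟩ := hex₁ x this
      have : φ (P.complex.d 2 1 y) = (P.complex.d 2 1 ≫ φ) y := rfl
      rw [this, hφ]
      rfl)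
    have hjinj : Function.Injective j := Subtype.val_injective
    have hexjπ : Function.Exact j π0 := by
      intro x
      constructor
      · intro hx
        obtain ⟨y, rfl⟩ := hex₀ x hx
        exact ⟨⟨P.complex.d 1 0 y, y, rfl⟩, rfl⟩
      · rintro ⟨⟨k, y, rfl⟩, rfl⟩
        exact hdπ y
    obtain ⟨Ψ, hΨ⟩ := extend_of_retr (h.retraction) j π0 hjinj hπsurj hexjπ
      (ModuleCat.ofHom ψK)
    refine ⟨Ψ, ?_⟩
    ext x
    show Ψ (P.complex.d 1 0 x) = φ x
    have h1 : P.complex.d 1 0 x = j (gcor x) := rfl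
    rw [h1, hΨ]
    exact hψK x



lemma isFlatMod_of_subsingleton (M : Type) [AddCommGroup M] [Module R M]
    [Subsingleton M] : IsFlatMod R M := by
  intro ι inst r x _
  letI := inst
  refine ⟨Fin 0, inferInstance, fun _ j => j.elim0, fun j => j.elim0, ?_,
    fun j => j.elim0⟩
  intro i
  exact Subsingleton.elim _ _

lemma isFlatMod_finsupp (X : Type) : IsFlatMod R (X →₀ R) := by
  classical
  intro ι inst r u hsum
  letI := inst
  set T : Finset X := Finset.univ.biUnion (fun i => (u i).support) with hT
  refine ⟨{s : X // s ∈ T}, inferInstance, fun i j => u i j.1,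
    fun j => Finsupp.single j.1 1, fun i => ?_, fun j => ?_⟩
  · ext s
    rw [Finsupp.finset_sum_apply]
    have : ∀ j : {s : X // s ∈ T}, ((u i j.1) • Finsupp.single j.1 (1:R)) s
        = if j.1 = s then u i j.1 else 0 := by
      intro j
      rw [Finsupp.smul_apply, Finsupp.single_apply]
      split <;> simp
    rw [Finset.sum_congr rfl (fun j _ => this j)]
    rw [Finset.sum_coe_sort T (fun s' => if s' = s then u i s' else 0)]
    rw [Finset.sum_ite_eq' T s (fun s' => u i s')]
    split
    · rfl
    · next hs =>
      by_contra hne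
      refine hs (Finset.mem_biUnion.mpr ⟨i, Finset.mem_univ i,
        Finsupp.mem_support_iff.mpr (fun h0 => hne ?_)⟩)
      rw [h0]
  · have := congrArg (fun f : X →₀ R => f j.1) hsum
    simp only [Finsupp.finset_sum_apply, Finsupp.smul_apply, smul_eq_mul,
      Finsupp.coe_zero, Pi.zero_apply] at this
    exact this

lemma ec_system_fin {M : Type} [AddCommGroup M] [Module R M] (hF : IsFlatMod R M) :
    ∀ (m : ℕ) (κ : Type) (instκ : Fintype κ) (A : Fin m → κ → R) (x : κ → M),
      (∀ i, ∑ j, A i j • x j = 0) →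
      ∃ (lam : Type) (_ : Fintype lam) (B : κ → lam → R) (z : lam → M),
        (∀ j, x j = ∑ l, B j l • z l) ∧ ∀ i l, ∑ j, A i j * B j l = 0 := by
  classical
  intro m
  induction m with
  | zero =>
    intro κ instκ A x _
    letI := instκ
    refine ⟨κ, instκ, fun j l => if j = l then 1 else 0, x, ?_, fun i => i.elim0⟩
    intro j
    have : ∀ l : κ, (if j = l then (1:R) else 0) • x l = if j = l then x l else 0 := by
      intro l
      split <;> simp
    rw [Finset.sum_congr rfl (fun l _ => this l), Finset.sum_ite_eq Finset.univ j x]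
    simp
  | succ m IH =>
    intro κ instκ A x h
    letI := instκ
    obtain ⟨κ', instκ', B1, y, hx, hAB1⟩ :=
      hF κ instκ (A (Fin.last m)) x (h (Fin.last m))
    letI := instκ'
    set A' : Fin m → κ' → R := fun i j' => ∑ j, A i.castSucc j * B1 j j' with hA'
    have hrel : ∀ i : Fin m, ∑ j', A' i j' • y j' = 0 := by
      intro i
      have e1 : ∀ j' : κ', A' i j' • y j' = ∑ j, (A i.castSucc j * B1 j j') • y j' := by
        intro j'
        rw [hA', Finset.sum_smul]
      rw [Finset.sum_congr rfl (fun j' _ => e1 j'), Finset.sum_comm]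
      have e2 : ∀ j : κ, (∑ j', (A i.castSucc j * B1 j j') • y j')
          = A i.castSucc j • x j := by
        intro j
        rw [hx j, Finset.smul_sum]
        exact Finset.sum_congr rfl (fun j' _ => by rw [mul_smul])
      rw [Finset.sum_congr rfl (fun j _ => e2 j)]
      exact h i.castSucc
    obtain ⟨lam, instlam, C, z, hy, hA'C⟩ := IH κ' instκ' A' y hrel
    letI := instlam
    refine ⟨lam, instlam, fun j l => ∑ j', B1 j j' * C j' l, z, ?_, ?_⟩
    · intro j
      rw [hx j]
      have e1 : ∀ j' : κ', B1 j j' • y j' = ∑ l, (B1 j j' * C j' l) • z l := by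
        intro j'
        rw [hy j', Finset.smul_sum]
        exact Finset.sum_congr rfl (fun l _ => by rw [mul_smul])
      rw [Finset.sum_congr rfl (fun j' _ => e1 j'), Finset.sum_comm]
      exact Finset.sum_congr rfl (fun l _ => by rw [Finset.sum_smul])
    · intro i l
      have key : ∀ i0 : Fin (m+1), ∑ j, A i0 j * ∑ j', B1 j j' * C j' l
          = ∑ j', (∑ j, A i0 j * B1 j j') * C j' l := by
        intro i0
        have e1 : ∀ j : κ, A i0 j * ∑ j', B1 j j' * C j' l
            = ∑ j', (A i0 j * B1 j j') * C j' l := by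
          intro j
          rw [Finset.mul_sum]
          exact Finset.sum_congr rfl (fun j' _ => by rw [mul_assoc])
        rw [Finset.sum_congr rfl (fun j _ => e1 j), Finset.sum_comm]
        exact Finset.sum_congr rfl (fun j' _ => by rw [Finset.sum_mul])
      refine Fin.lastCases ?_ ?_ i
      · rw [key]
        have : ∀ j' : κ', (∑ j, A (Fin.last m) j * B1 j j') * C j' l = 0 := by
          intro j'
          rw [hAB1 j', zero_mul]
        rw [Finset.sum_congr rfl (fun j' _ => this j')]
        exact Finset.sum_const_zero
      · intro i0
        rw [key]
        have : ∀ j' : κ', (∑ j, A i0.castSucc j * B1 j j') * C j' l = A' i0 j' * C j' l :=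
          fun j' => rfl
        rw [Finset.sum_congr rfl (fun j' _ => this j')]
        exact hA'C i0 l

lemma ec_system {M : Type} [AddCommGroup M] [Module R M] (hF : IsFlatMod R M)
    (ι κ : Type) (instι : Fintype ι) (instκ : Fintype κ) (A : ι → κ → R) (x : κ → M)
    (h : ∀ i, ∑ j, A i j • x j = 0) :
    ∃ (lam : Type) (_ : Fintype lam) (B : κ → lam → R) (z : lam → M),
      (∀ j, x j = ∑ l, B j l • z l) ∧ ∀ i l, ∑ j, A i j * B j l = 0 := by
  letI := instι; letI := instκ
  obtain ⟨e⟩ : Nonempty (ι ≃ Fin (Fintype.card ι)) := ⟨Fintype.equivFin ι⟩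
  obtain ⟨lam, instlam, B, z, hB, hcond⟩ := ec_system_fin hF (Fintype.card ι) κ instκ
    (fun i0 j => A (e.symm i0) j) x (fun i0 => h (e.symm i0))
  refine ⟨lam, instlam, B, z, hB, fun i l => ?_⟩
  have := hcond (e i) l
  simpa using this

/-- Every EC-flat module admits a surjection from a free module with projective total space,
flat total space, and EC-flat kernel. -/
lemma flat_syzygy (F : ModuleCat.{0} R) (hF : IsFlatMod R F) :
    ∃ (K P : ModuleCat.{0} R) (j : K ⟶ P) (g : P ⟶ F),
      Projective P ∧ IsFlatMod R P ∧ IsFlatMod R K ∧ Function.Injective j ∧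
        Function.Surjective g ∧ Function.Exact j g := by
  classical
  set P : ModuleCat.{0} R := ModuleCat.of R (F →₀ R) with hP
  set g0 : (F →₀ R) →ₗ[R] F := Finsupp.linearCombination R (id : F → F) with hg0
  have hg0single : ∀ x : F, g0 (Finsupp.single x 1) = x := by
    intro x
    rw [hg0, Finsupp.linearCombination_single, one_smul]
    rfl
  have hg0surj : Function.Surjective g0 := fun x => ⟨Finsupp.single x 1, hg0single x⟩
  set Kr : Submodule R (F →₀ R) := LinearMap.ker g0 with hKr
  set K : ModuleCat.{0} R := ModuleCat.of R ↥Kr with hK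
  set j : K ⟶ P := ModuleCat.ofHom Kr.subtype with hj
  refine ⟨K, P, j, ModuleCat.ofHom g0, ModuleCat.projective_of_free
    (Finsupp.basisSingleOne : Module.Basis F R (F →₀ R)), isFlatMod_finsupp F, ?_,
    Subtype.val_injective, hg0surj, ?_⟩
  · -- kernel is EC-flat
    intro ι instι r u hsum
    letI := instι
    have hsumP : ∑ i, r i • (u i).1 = 0 := by
      have := congrArg (Kr.subtype) hsum
      rw [map_sum, map_zero] at this
      simpa using this
    obtain ⟨κ₀, instκ₀, a₀, y₀, hdec, hcond⟩ := isFlatMod_finsupp (R := R) F ι instι r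
      (fun i => (u i).1) hsumP
    letI := instκ₀
    have hrel : ∀ i, ∑ j0, a₀ i j0 • g0 (y₀ j0) = 0 := by
      intro i
      have : g0 (u i).1 = 0 := (u i).2
      rw [← this, hdec i, map_sum]
      exact Finset.sum_congr rfl (fun j0 _ => by rw [map_smul])
    obtain ⟨lam, instlam, B, z, hgy, hab⟩ := ec_system hF ι κ₀ instι instκ₀ a₀
      (fun j0 => g0 (y₀ j0)) hrel
    letI := instlam
    set w : lam → (F →₀ R) := fun l => Finsupp.single (z l) 1 with hw
    have hgw : ∀ l, g0 (w l) = z l := fun l => hg0single (z l)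
    set y' : κ₀ → (F →₀ R) := fun j0 => y₀ j0 - ∑ l, B j0 l • w l with hy'
    have hy'mem : ∀ j0, y' j0 ∈ Kr := by
      intro j0
      rw [hKr, LinearMap.mem_ker, hy', map_sub, map_sum]
      have : ∀ l, g0 (B j0 l • w l) = B j0 l • z l := by
        intro l
        rw [map_smul, hgw]
      rw [Finset.sum_congr rfl (fun l _ => this l), ← hgy j0, sub_self]
    refine ⟨κ₀, instκ₀, a₀, fun j0 => ⟨y' j0, hy'mem j0⟩, ?_, hcond⟩
    intro i
    apply Subtype.val_injective
    have hvs : ((∑ j0, a₀ i j0 • (⟨y' j0, hy'mem j0⟩ : ↥Kr)) : ↥Kr).1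
        = ∑ j0, a₀ i j0 • y' j0 := by
      calc ((∑ j0, a₀ i j0 • (⟨y' j0, hy'mem j0⟩ : ↥Kr)) : ↥Kr).1
          = Kr.subtype (∑ j0, a₀ i j0 • (⟨y' j0, hy'mem j0⟩ : ↥Kr)) := rfl
      _ = ∑ j0, Kr.subtype (a₀ i j0 • (⟨y' j0, hy'mem j0⟩ : ↥Kr)) := map_sum _ _ _
      _ = ∑ j0, a₀ i j0 • y' j0 := Finset.sum_congr rfl (fun j0 _ => by
            rw [map_smul]; rfl)
    show (u i).1 = ((∑ j0, a₀ i j0 • (⟨y' j0, hy'mem j0⟩ : ↥Kr)) : ↥Kr).1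
    rw [hvs]
    have e1 : ∀ j0, a₀ i j0 • y' j0
        = a₀ i j0 • y₀ j0 - ∑ l, (a₀ i j0 * B j0 l) • w l := by
      intro j0
      rw [hy', smul_sub, Finset.smul_sum]
      congr 1
      exact Finset.sum_congr rfl (fun l _ => by rw [mul_smul])
    rw [Finset.sum_congr rfl (fun j0 _ => e1 j0), Finset.sum_sub_distrib, ← hdec i,
      Finset.sum_comm]
    have e2 : ∀ l, (∑ j0, (a₀ i j0 * B j0 l) • w l) = 0 := by
      intro l
      rw [← Finset.sum_smul, hab i l, zero_smul]
    rw [Finset.sum_congr rfl (fun l _ => e2 l), Finset.sum_const_zero, sub_zero]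
  · -- exactness
    intro p
    constructor
    · intro hp
      exact ⟨⟨p, hp⟩, rfl⟩
    · rintro ⟨k, rfl⟩
      exact k.2


lemma fdLE_succ_of {n : ℕ} {M : ModuleCat.{0} R} (h : fdLE R n M) : fdLE R (n+1) M := by
  induction n generalizing M with
  | zero =>
    refine ⟨ModuleCat.of R PUnit, M, (0 : ModuleCat.of R PUnit ⟶ M), 𝟙 M, h, ?_, ?_, ?_, ?_⟩
    · intro a b _
      exact Subsingleton.elim a b
    · exact fun m => ⟨m, rfl⟩
    · intro m
      constructor
      · intro hm
        refine ⟨0, ?_⟩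
        show (0 : M) = m
        exact hm.symm
      · rintro ⟨p, rfl⟩
        rfl
    · exact isFlatMod_of_subsingleton PUnit
  | succ n IH =>
    obtain ⟨K, F, f, g, hF, hf, hg, hex, hK⟩ := h
    exact ⟨K, F, f, g, hF, hf, hg, hex, IH hK⟩

lemma fdLE_mono {n m : ℕ} (hnm : n ≤ m) {M : ModuleCat.{0} R} (h : fdLE R n M) :
    fdLE R m M := by
  induction hnm with
  | refl => exact h
  | step _ IH => exact fdLE_succ_of IH

lemma cosyzygy_reassoc {m : ℕ} {C W : ModuleCat.{0} R} (h : Cosyzygy R (m+1) C W) :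
    ∃ (D E : ModuleCat.{0} R) (f : D ⟶ E) (g : E ⟶ W),
      Cosyzygy R m C D ∧ Injective E ∧ Function.Injective f ∧ Function.Surjective g ∧
        Function.Exact f g := by
  induction m generalizing C with
  | zero =>
    obtain ⟨E, C₁, f, g, hE, hf, hg, hex, e, he⟩ := h
    refine ⟨C, E, f, (g ≫ e : E ⟶ W), ⟨𝟙 C, Function.bijective_id⟩, hE, hf,
      fun w => ?_, ?_⟩
    · obtain ⟨c₁, rfl⟩ := he.2 w
      obtain ⟨x, rfl⟩ := hg c₁
      exact ⟨x, rfl⟩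
    · intro x
      constructor
      · intro hx
        have : e (g x) = 0 := hx
        have hg0 : g x = 0 := by
          apply he.1
          rw [this, map_zero]
        exact (hex x).mp hg0
      · intro hx
        have : g x = 0 := (hex x).mpr hx
        show e (g x) = 0
        rw [this, map_zero]
  | succ m IH =>
    obtain ⟨E, C₁, f, g, hE, hf, hg, hex, hcs⟩ := h
    obtain ⟨D, E', f', g', hcsD, hE', hf', hg', hex'⟩ := IH hcs
    exact ⟨D, E', f', g', ⟨E, C₁, f, g, hE, hf, hg, hex, hcsD⟩, hE', hf', hg', hex'⟩

def CotorsionS (C : ModuleCat.{0} R) : Prop :=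
  ∀ F : ModuleCat.{0} R, IsFlatMod R F → SplitAllSeq R F C

lemma Slemma (n : ℕ)
    (Tn : ∀ (C W : ModuleCat.{0} R), CotorsionS C → Cosyzygy R (n+1) C W →
      ∀ (K F : ModuleCat.{0} R) (j : K ⟶ F), IsFlatMod R F → fdLE R n K →
      Function.Injective j → ∀ ψ : K ⟶ W, ∃ Ψ : F ⟶ W, ∀ k, Ψ (j k) = ψ k)
    (C W : ModuleCat.{0} R) (hC : CotorsionS C) (hcs : Cosyzygy R (n+1) C W)
    (M : ModuleCat.{0} R) (hM : fdLE R (n+1) M) : SplitAllSeq R M W := by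
  obtain ⟨K₀, F₀, j₀, g₀, hF₀, hj₀, hg₀, hex₀, hK₀⟩ := hM
  intro X ι q hι hq hexq
  have hsplitF₀ : SplitAllSeq R F₀ W := by
    obtain ⟨K', P', j', g', hP'proj, hP'flat, hK'flat, hj', hg', hex'⟩ := flat_syzygy F₀ hF₀
    exact splitAll_of_extension_property hP'proj j' g' hj' hg' hex'
      (fun ψ' => Tn C W hC hcs K' P' j' hP'flat
        (fdLE_mono (Nat.zero_le n) (show fdLE R 0 K' from hK'flat)) hj' ψ')
  obtain ⟨t, ht⟩ := lift_through_surjection ι q hι hq hexq hsplitF₀ g₀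
  obtain ⟨ψ₁, hψ₁⟩ := factorLM ι.hom hι
    (t.hom ∘ₗ j₀.hom) (fun k => (hexq _).mp (by
      show q (t (j₀ k)) = 0
      rw [ht]
      exact (hex₀ (j₀ k)).mpr ⟨k, rfl⟩))
  obtain ⟨Ψ₁, hΨ₁⟩ := Tn C W hC hcs K₀ F₀ j₀ hF₀ hK₀ hj₀ (ModuleCat.ofHom ψ₁)
  obtain ⟨s, hs⟩ := descendLM g₀.hom
    (t.hom - ι.hom ∘ₗ Ψ₁.hom) hg₀ (by
      intro p hp
      obtain ⟨k, rfl⟩ := (hex₀ p).mp hp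
      show t (j₀ k) - ι (Ψ₁ (j₀ k)) = 0
      rw [hΨ₁]
      show t (j₀ k) - ι.hom (ψ₁ k) = 0
      rw [hψ₁]
      exact sub_self _)
  refine ⟨ModuleCat.ofHom s, fun m => ?_⟩
  obtain ⟨p, rfl⟩ := hg₀ m
  show q (s (g₀.hom p)) = g₀ p
  rw [hs]
  show q (t p - ι (Ψ₁ p)) = g₀ p
  rw [map_sub, ht, (hexq _).mpr ⟨Ψ₁ p, rfl⟩, sub_zero]

lemma Tmain : ∀ n : ℕ, ∀ (C W : ModuleCat.{0} R), CotorsionS C → Cosyzygy R (n+1) C W →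
    ∀ (K F : ModuleCat.{0} R) (j : K ⟶ F), IsFlatMod R F → fdLE R n K →
    Function.Injective j → ∀ ψ : K ⟶ W, ∃ Ψ : F ⟶ W, ∀ k, Ψ (j k) = ψ k := by
  intro n
  induction n with
  | zero =>
    intro C W hC hcs K F j hFflat hKfd hjinj ψ
    obtain ⟨D, E, f, g, hcsD, hE, hf, hg, hexDE⟩ := cosyzygy_reassoc hcs
    obtain ⟨e, he⟩ := hcsD
    have hsplit : SplitAllSeq R K D :=
      (hC K (show IsFlatMod R K from hKfd)).of_iso e he
    obtain ⟨φ, hφ⟩ := lift_through_surjection f g hf hg hexDE hsplit ψ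
    obtain ⟨Φ, hΦ⟩ := extend_into_injective hE j hjinj φ
    refine ⟨Φ ≫ g, fun k => ?_⟩
    show g (Φ (j k)) = ψ k
    rw [hΦ, hφ]
  | succ n IH =>
    intro C W hC hcs K F j hFflat hKfd hjinj ψ
    obtain ⟨D, E, f, g, hcsD, hE, hf, hg, hexDE⟩ := cosyzygy_reassoc hcs
    have hsplit : SplitAllSeq R K D := Slemma n IH C D hC hcsD K hKfd
    obtain ⟨φ, hφ⟩ := lift_through_surjection f g hf hg hexDE hsplit ψ
    obtain ⟨Φ, hΦ⟩ := extend_into_injective hE j hjinj φ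
    refine ⟨Φ ≫ g, fun k => ?_⟩
    show g (Φ (j k)) = ψ k
    rw [hΦ, hφ]

/-- If `C` is cotorsion and `W` is an `n`-th cosyzygy of `C`, then `W` is `L_n`-injective. -/
theorem stmt7 (n : ℕ) (C W : ModuleCat.{0} R)
    (hC : Cotorsion R C) (hcs : Cosyzygy R n C W) :
    LnInj R n W := by
  intro M hM
  have hCS : CotorsionS C := fun F hF => (extVanish_iff_splitAllSeq F C).mp (hC F hF)
  refine (extVanish_iff_splitAllSeq M W).mpr ?_
  cases n with
  | zero =>
    obtain ⟨e, he⟩ := hcs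
    exact (hCS M (show IsFlatMod R M from hM)).of_iso e he
  | succ n =>
    exact Slemma n (Tmain n) C W hCS hcs M hM
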